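/- There exists an absolute constant C > 0 such that for every Boolean function f : {0,1}^n → {0,1} and all 0 < δ < ε ≤ 1/3, pdeg_δ(f) ≤ pdeg_ε(f) · C · log(1/δ) / log(1/ε). -/

import Mathlib

open scoped Classical

noncomputable def evalBool {ι : Type} (a : ι → Bool) (P : MvPolynomial ι ℝ) : ℝ :=
  MvPolynomial.eval (fun i => if a i then (1:ℝ) else 0) P

def HasProbPoly {ι : Type} (f : (ι → Bool) → Bool) (ε : ℝ) (d : ℕ) : Prop :=
  ∃ (k : ℕ) (w : Fin k → ℝ) (P : Fin k → MvPolynomial ι ℝ),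
    (∀ i, 0 ≤ w i) ∧ (∑ i, w i = 1) ∧ (∀ i, (P i).totalDegree ≤ d) ∧
    ∀ a : ι → Bool,
      ∑ i ∈ Finset.univ.filter
          (fun i => evalBool a (P i) ≠ (if f a then (1:ℝ) else 0)), w i ≤ ε

noncomputable def pdeg {ι : Type} (ε : ℝ) (f : (ι → Bool) → Bool) : ℕ :=
  sInf {d | HasProbPoly f ε d}

def TrulyVariate {ι : Type} (f : (ι → Bool) → Bool) : Prop :=
  ∀ i : ι, ∃ a, f (Function.update a i (!(a i))) ≠ f a

def ORf (n : ℕ) : (Fin n → Bool) → Bool := fun a => decide (∃ i, a i = true)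

noncomputable def sensitivity {n : ℕ} (f : (Fin n → Bool) → Bool) : ℕ :=
  Finset.univ.sup (fun a : Fin n → Bool =>
    (Finset.univ.filter (fun i : Fin n => f (Function.update a i (!(a i))) ≠ f a)).card)


noncomputable def majR (m t : ℕ) (x : Fin t → ℝ) : ℝ :=
  ∑ T ∈ Finset.univ.filter (fun T : Finset (Fin t) => m ≤ T.card),
    (∏ j ∈ T, x j) * ∏ j ∈ Tᶜ, (1 - x j)

noncomputable def majP {ι : Type} (m t : ℕ) (p : Fin t → MvPolynomial ι ℝ) : MvPolynomial ι ℝ :=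
  ∑ T ∈ Finset.univ.filter (fun T : Finset (Fin t) => m ≤ T.card),
    (∏ j ∈ T, p j) * ∏ j ∈ Tᶜ, (1 - p j)

lemma evalBool_majP {ι : Type} (a : ι → Bool) (m t : ℕ) (p : Fin t → MvPolynomial ι ℝ) :
    evalBool a (majP m t p) = majR m t (fun j => evalBool a (p j)) := by
  simp only [majP, majR, evalBool, map_sum, map_mul, map_prod, map_sub, map_one]

lemma majR_eq_zero (m t : ℕ) (x : Fin t → ℝ) (S : Finset (Fin t))
    (hS : ∀ j ∈ S, x j = 0) (h : t < m + S.card) : majR m t x = 0 := by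
  apply Finset.sum_eq_zero
  intro T hT
  have hTc : m ≤ T.card := (Finset.mem_filter.mp hT).2
  have hcard : 0 < (T ∩ S).card := by
    have h1 := Finset.card_inter_add_card_union T S
    have h2 : (T ∪ S).card ≤ t := by
      simpa using Finset.card_le_univ (T ∪ S)
    omega
  obtain ⟨j, hj⟩ := Finset.card_pos.mp hcard
  have hjT : j ∈ T := (Finset.mem_inter.mp hj).1
  have hjS : j ∈ S := (Finset.mem_inter.mp hj).2
  exact mul_eq_zero_of_left (Finset.prod_eq_zero hjT (hS j hjS)) _

lemma majR_eq_one (m t : ℕ) (x : Fin t → ℝ) (S : Finset (Fin t))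
    (hc : m ≤ S.card) (h1 : ∀ j ∈ S, x j = 1) : majR m t x = 1 := by
  rw [majR, ← Finset.sum_filter_add_sum_filter_not _ (fun T => S ⊆ T)]
  have hz : ∑ T ∈ (Finset.univ.filter (fun T : Finset (Fin t) => m ≤ T.card)).filter
      (fun T => ¬ S ⊆ T), (∏ j ∈ T, x j) * ∏ j ∈ Tᶜ, (1 - x j) = 0 := by
    apply Finset.sum_eq_zero
    intro T hT
    obtain ⟨j, hjS, hjT⟩ := Finset.not_subset.mp (Finset.mem_filter.mp hT).2
    have : (1 - x j) = 0 := by rw [h1 j hjS]; ring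
    exact mul_eq_zero_of_right _ (Finset.prod_eq_zero (Finset.mem_compl.mpr hjT) this)
  rw [hz, add_zero]
  have hset : (Finset.univ.filter (fun T : Finset (Fin t) => m ≤ T.card)).filter
      (fun T => S ⊆ T) = Finset.univ.filter (fun T => S ⊆ T) := by
    ext T
    simp only [Finset.mem_filter, Finset.mem_univ, true_and]
    exact ⟨fun h => h.2, fun h => ⟨le_trans hc (Finset.card_le_card h), h⟩⟩
  rw [hset]
  have hrhs : ∑ U ∈ Sᶜ.powerset, (∏ j ∈ U, x j) * ∏ j ∈ Sᶜ \ U, (1 - x j) = 1 := by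
    rw [← Finset.prod_add]
    rw [Finset.prod_congr rfl (fun j _ => by ring : ∀ j ∈ Sᶜ, (x j + (1 - x j)) = (1:ℝ))]
    exact Finset.prod_const_one
  refine Eq.trans ?_ hrhs
  apply Finset.sum_nbij' (i := fun T => T \ S) (j := fun U => U ∪ S)
  · intro T hT
    simp only [Finset.mem_filter, Finset.mem_univ, true_and] at hT
    simp only [Finset.mem_powerset]
    intro j hj
    simp only [Finset.mem_sdiff] at hj
    exact Finset.mem_compl.mpr hj.2
  · intro U hU
    simp only [Finset.mem_filter, Finset.mem_univ, true_and]
    exact Finset.subset_union_right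
  · intro T hT
    simp only [Finset.mem_filter, Finset.mem_univ, true_and] at hT
    exact Finset.sdiff_union_of_subset hT
  · intro U hU
    simp only [Finset.mem_powerset] at hU
    rw [Finset.union_sdiff_right, Finset.sdiff_eq_self_iff_disjoint]
    exact Finset.disjoint_right.mpr (fun j hjS => by
      intro hjU
      exact (Finset.mem_compl.mp (hU hjU)) hjS)
  · intro T hT
    simp only [Finset.mem_filter, Finset.mem_univ, true_and] at hT
    have hprodT : ∏ j ∈ T, x j = ∏ j ∈ T \ S, x j := by
      rw [← Finset.prod_sdiff hT, Finset.prod_congr rfl (fun j hj => h1 j hj),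
        Finset.prod_const_one, mul_one]
    have hcompl : Tᶜ = Sᶜ \ (T \ S) := by
      ext j
      simp only [Finset.mem_compl, Finset.mem_sdiff]
      constructor
      · intro hjT
        exact ⟨fun hjS => hjT (hT hjS), fun hh => hjT hh.1⟩
      · intro ⟨hjS, hh⟩ hjT
        exact hh ⟨hjT, hjS⟩
    rw [hprodT, hcompl]

lemma totalDegree_one_sub {ι : Type} (p : MvPolynomial ι ℝ) {d : ℕ} (hp : p.totalDegree ≤ d) :
    (1 - p).totalDegree ≤ d := by
  rw [sub_eq_add_neg]
  refine le_trans (MvPolynomial.totalDegree_add _ _) (max_le ?_ ?_)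
  · simp [MvPolynomial.totalDegree_one]
  · rwa [MvPolynomial.totalDegree_neg]

lemma majP_totalDegree {ι : Type} (m t d : ℕ) (p : Fin t → MvPolynomial ι ℝ)
    (hp : ∀ j, (p j).totalDegree ≤ d) : (majP m t p).totalDegree ≤ t * d := by
  refine le_trans (MvPolynomial.totalDegree_finset_sum _ _) (Finset.sup_le fun T _ => ?_)
  refine le_trans (MvPolynomial.totalDegree_mul _ _) ?_
  have h1 : (∏ j ∈ T, p j).totalDegree ≤ T.card * d := by
    refine le_trans (MvPolynomial.totalDegree_finset_prod _ _) ?_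
    calc ∑ j ∈ T, (p j).totalDegree ≤ ∑ _j ∈ T, d := Finset.sum_le_sum fun j _ => hp j
      _ = T.card * d := by rw [Finset.sum_const, smul_eq_mul]
  have h2 : (∏ j ∈ Tᶜ, (1 - p j)).totalDegree ≤ Tᶜ.card * d := by
    refine le_trans (MvPolynomial.totalDegree_finset_prod _ _) ?_
    calc ∑ j ∈ Tᶜ, (1 - p j).totalDegree ≤ ∑ _j ∈ Tᶜ, d :=
        Finset.sum_le_sum fun j _ => totalDegree_one_sub _ (hp j)
      _ = Tᶜ.card * d := by rw [Finset.sum_const, smul_eq_mul]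
  have h3 : T.card + Tᶜ.card = t := by
    rw [Finset.card_add_card_compl]
    simp
  calc (∏ j ∈ T, p j).totalDegree + (∏ j ∈ Tᶜ, (1 - p j)).totalDegree
      ≤ T.card * d + Tᶜ.card * d := Nat.add_le_add h1 h2
    _ = (T.card + Tᶜ.card) * d := (Nat.add_mul _ _ _).symm
    _ = t * d := by rw [h3]

lemma hasProbPoly_exact {n : ℕ} (f : (Fin n → Bool) → Bool) {ε : ℝ} (hε : 0 ≤ ε) :
    HasProbPoly f ε n := by
  refine ⟨1, fun _ => 1, fun _ => ∑ b ∈ Finset.univ.filter (fun b : Fin n → Bool => f b = true),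
    ∏ j, (if b j then (MvPolynomial.X j : MvPolynomial (Fin n) ℝ) else 1 - MvPolynomial.X j),
    fun _ => zero_le_one, by simp, ?_, ?_⟩
  · intro i
    refine le_trans (MvPolynomial.totalDegree_finset_sum _ _) (Finset.sup_le fun b _ => ?_)
    refine le_trans (MvPolynomial.totalDegree_finset_prod _ _) ?_
    calc ∑ j : Fin n, (if b j then (MvPolynomial.X j : MvPolynomial (Fin n) ℝ)
            else 1 - MvPolynomial.X j).totalDegree
        ≤ ∑ _j : Fin n, 1 := by
          refine Finset.sum_le_sum fun j _ => ?_
          by_cases hb : b j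
          · simp [hb, MvPolynomial.totalDegree_X]
          · simp only [hb, if_false]
            exact totalDegree_one_sub _ (le_of_eq (MvPolynomial.totalDegree_X _))
      _ = n := by simp
  · intro a
    have heval : evalBool a (∑ b ∈ Finset.univ.filter (fun b : Fin n → Bool => f b = true),
        ∏ j, (if b j then (MvPolynomial.X j : MvPolynomial (Fin n) ℝ) else 1 - MvPolynomial.X j))
        = (if f a then (1:ℝ) else 0) := by
      rw [evalBool, map_sum]
      have hterm : ∀ b : Fin n → Bool,
          MvPolynomial.eval (fun i => if a i then (1:ℝ) else 0)
            (∏ j, (if b j then (MvPolynomial.X j : MvPolynomial (Fin n) ℝ) else 1 - MvPolynomial.X j))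
          = if a = b then 1 else 0 := by
        intro b
        rw [map_prod]
        by_cases hab : a = b
        · subst hab
          rw [if_pos rfl]
          apply Finset.prod_eq_one
          intro j _
          cases hj : a j <;> simp [hj]
        · rw [if_neg hab]
          obtain ⟨j, hj⟩ : ∃ j, a j ≠ b j := by
            by_contra hcon
            push_neg at hcon
            exact hab (funext hcon)
          apply Finset.prod_eq_zero (Finset.mem_univ j)
          cases hbj : b j <;> cases haj : a j <;> simp_all
      rw [Finset.sum_congr rfl (fun b _ => hterm b), Finset.sum_ite_eq]
      by_cases hfa : f a <;> simp [hfa]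
    have : Finset.univ.filter (fun i : Fin 1 =>
        evalBool a ((fun _ => ∑ b ∈ Finset.univ.filter (fun b : Fin n → Bool => f b = true),
          ∏ j, (if b j then (MvPolynomial.X j : MvPolynomial (Fin n) ℝ) else 1 - MvPolynomial.X j)) i)
          ≠ (if f a then (1:ℝ) else 0)) = ∅ := by
      apply Finset.filter_false_of_mem
      intro i _
      simp [heval]
    rw [this]
    simpa using hε

lemma HasProbPoly.mono {ι : Type} {f : (ι → Bool) → Bool} {ε ε' : ℝ} {d : ℕ}
    (h : HasProbPoly f ε d) (hle : ε ≤ ε') : HasProbPoly f ε' d := by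
  obtain ⟨k, w, P, h1, h2, h3, h4⟩ := h
  exact ⟨k, w, P, h1, h2, h3, fun a => le_trans (h4 a) hle⟩

lemma amplify {n : ℕ} (f : (Fin n → Bool) → Bool) {ε : ℝ} {d : ℕ} (k : ℕ)
    (hε0 : 0 ≤ ε) (hε3 : ε ≤ 1/3) (h : HasProbPoly f ε d) :
    HasProbPoly f (2*ε*(4*ε*(1-ε))^k) ((2*k+1) * d) := by
  obtain ⟨s, w, P, hw0, hw1, hdeg, herr⟩ := h
  set t := 2*k+1 with ht
  let e := Fintype.equivFin (Fin t → Fin s)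
  refine ⟨Fintype.card (Fin t → Fin s),
    fun i => ∏ j, w (e.symm i j),
    fun i => majP (k+1) t (fun j => P (e.symm i j)), ?_, ?_, ?_, ?_⟩
  · intro i
    exact Finset.prod_nonneg fun j _ => hw0 _
  · rw [Equiv.sum_comp e.symm (fun v : Fin t → Fin s => ∏ j, w (v j))]
    have := Finset.prod_univ_sum (fun _ : Fin t => (Finset.univ : Finset (Fin s))) (fun _ i => w i)
    rw [Fintype.piFinset_univ] at this
    rw [← this, hw1, Finset.prod_const_one]
  · intro i
    rw [mul_comm (2*k+1) d, ← ht, mul_comm d t]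
    exact majP_totalDegree _ _ _ _ fun j => hdeg _
  · intro a
    set fa := (if f a then (1:ℝ) else 0) with hfa
    set Bad := Finset.univ.filter (fun i : Fin s => evalBool a (P i) ≠ fa) with hBad
    set β := ∑ i ∈ Bad, w i with hβ
    set γ := ∑ i ∈ Badᶜ, w i with hγ
    have hβε : β ≤ ε := herr a
    have hβ0 : 0 ≤ β := Finset.sum_nonneg fun i _ => hw0 i
    have hγ0 : 0 ≤ γ := Finset.sum_nonneg fun i _ => hw0 i
    have hβγ1 : β + γ = 1 := by rw [hβ, hγ, Finset.sum_add_sum_compl, hw1]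
    have hβγ : β ≤ γ := by linarith
    -- rewrite the error sum as a sum over tuples
    rw [Finset.sum_filter]
    rw [Equiv.sum_comp e.symm (fun v : Fin t → Fin s =>
      if evalBool a (majP (k+1) t (fun j => P (v j))) ≠ fa then ∏ j, w (v j) else 0)]
    rw [← Finset.sum_filter]
    -- the error set is contained in the set of tuples with many bad coordinates
    have hsubset : Finset.univ.filter (fun v : Fin t → Fin s =>
        evalBool a (majP (k+1) t (fun j => P (v j))) ≠ fa) ⊆
        Finset.univ.filter (fun v : Fin t → Fin s =>
          k+1 ≤ (Finset.univ.filter (fun j => v j ∈ Bad)).card) := by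
      intro v hv
      simp only [Finset.mem_filter, Finset.mem_univ, true_and] at hv ⊢
      by_contra hcon
      push_neg at hcon
      apply hv
      rw [evalBool_majP]
      set S := Finset.univ.filter (fun j => v j ∉ Bad) with hS
      have hgood : ∀ j ∈ S, evalBool a (P (v j)) = fa := by
        intro j hj
        have := (Finset.mem_filter.mp hj).2
        rw [hBad] at this
        simp only [Finset.mem_filter, Finset.mem_univ, true_and, not_not] at this
        exact this
      have hScard : k+1 ≤ S.card := by
        have hsplit : (Finset.univ.filter (fun j : Fin t => v j ∈ Bad)).card + S.card = t := by
          rw [hS]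
          rw [Finset.card_filter_add_card_filter_not (fun j : Fin t => v j ∈ Bad)]
          simp
        omega
      by_cases hf : f a
      · have : fa = 1 := by rw [hfa, if_pos hf]
        rw [this] at hgood ⊢
        exact majR_eq_one (k+1) t _ S hScard hgood
      · have : fa = 0 := by rw [hfa, if_neg hf]
        rw [this] at hgood ⊢
        exact majR_eq_zero (k+1) t _ S hgood (by omega)
    have hmono := Finset.sum_le_sum_of_subset_of_nonneg
      (f := fun v : Fin t → Fin s => ∏ j, w (v j)) hsubset
      (fun v _ _ => Finset.prod_nonneg fun j _ => hw0 _)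
    refine le_trans hmono ?_
    -- partition by the bad set
    have hfib := Finset.sum_fiberwise_of_maps_to
      (g := fun v : Fin t → Fin s => Finset.univ.filter (fun j => v j ∈ Bad))
      (s := Finset.univ.filter (fun v : Fin t → Fin s =>
        k+1 ≤ (Finset.univ.filter (fun j => v j ∈ Bad)).card))
      (t := (Finset.univ : Finset (Finset (Fin t))).filter (fun B => k+1 ≤ B.card))
      (by
        intro v hv
        simp only [Finset.mem_filter, Finset.mem_univ, true_and] at hv ⊢
        exact hv)
      (fun v => ∏ j, w (v j))
    rw [← hfib]
    -- bound each fiber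
    have hfiber : ∀ B ∈ (Finset.univ : Finset (Finset (Fin t))).filter (fun B => k+1 ≤ B.card),
        ∑ v ∈ (Finset.univ.filter (fun v : Fin t → Fin s =>
          k+1 ≤ (Finset.univ.filter (fun j => v j ∈ Bad)).card)).filter
            (fun v => Finset.univ.filter (fun j => v j ∈ Bad) = B),
          ∏ j, w (v j) ≤ β^(k+1) * γ^k := by
      intro B hB
      have hBcard : k+1 ≤ B.card := (Finset.mem_filter.mp hB).2
      have hBt : B.card ≤ t := by
        have := Finset.card_le_univ B
        simpa using this
      -- simplify the double filter
      have hff : (Finset.univ.filter (fun v : Fin t → Fin s =>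
          k+1 ≤ (Finset.univ.filter (fun j => v j ∈ Bad)).card)).filter
            (fun v => Finset.univ.filter (fun j => v j ∈ Bad) = B)
          = Finset.univ.filter (fun v : Fin t → Fin s =>
              Finset.univ.filter (fun j => v j ∈ Bad) = B) := by
        ext v
        simp only [Finset.mem_filter, Finset.mem_univ, true_and]
        constructor
        · exact fun h => h.2
        · intro h
          exact ⟨by rw [h]; exact hBcard, h⟩
      rw [hff]
      -- the fiber is a product set
      have hpi : Finset.univ.filter (fun v : Fin t → Fin s =>
          Finset.univ.filter (fun j => v j ∈ Bad) = B)
          = Fintype.piFinset (fun j => if j ∈ B then Bad else Badᶜ) := by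
        ext v
        simp only [Finset.mem_filter, Finset.mem_univ, true_and, Fintype.mem_piFinset]
        constructor
        · intro h j
          by_cases hj : j ∈ B
          · rw [if_pos hj]
            rw [← h] at hj
            exact (Finset.mem_filter.mp hj).2
          · rw [if_neg hj]
            rw [← h] at hj
            simp only [Finset.mem_filter, Finset.mem_univ, true_and] at hj
            exact Finset.mem_compl.mpr hj
        · intro h
          ext j
          simp only [Finset.mem_filter, Finset.mem_univ, true_and]
          constructor
          · intro hvj
            by_contra hj
            have := h j
            rw [if_neg hj] at this
            exact (Finset.mem_compl.mp this) hvj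
          · intro hj
            have := h j
            rw [if_pos hj] at this
            exact this
      rw [hpi]
      have hprodsum := Finset.prod_univ_sum (fun j : Fin t => if j ∈ B then Bad else Badᶜ)
        (fun _ i => w i)
      rw [← hprodsum]
      have hite : ∀ j : Fin t, ∑ i ∈ (if j ∈ B then Bad else Badᶜ), w i
          = if j ∈ B then β else γ := by
        intro j
        by_cases hj : j ∈ B <;> simp [hj, hβ, hγ]
      rw [Finset.prod_congr rfl (fun j _ => hite j)]
      rw [Finset.prod_ite (fun _ => β) (fun _ => γ), Finset.prod_const, Finset.prod_const]
      have h1 : (Finset.univ.filter (fun j : Fin t => j ∈ B)).card = B.card := by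
        congr 1
        ext j
        simp
      have h2 : (Finset.univ.filter (fun j : Fin t => j ∉ B)).card = t - B.card := by
        have : Finset.univ.filter (fun j : Fin t => j ∉ B) = Bᶜ := by
          ext j
          simp
        rw [this, Finset.card_compl]
        simp
      rw [h1, h2]
      -- β^B.card * γ^(t - B.card) ≤ β^(k+1) * γ^k
      obtain ⟨r, hr⟩ : ∃ r, B.card = (k+1) + r ∧ t - B.card = k - r ∧ r ≤ k := by
        refine ⟨B.card - (k+1), by omega⟩
      obtain ⟨hr1, hr2, hr3⟩ := hr
      rw [hr2, hr1, pow_add]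
      have hkr : k = r + (k - r) := by omega
      calc β^(k+1) * β^r * γ^(k-r) ≤ β^(k+1) * γ^r * γ^(k-r) := by
            have : β^r ≤ γ^r := pow_le_pow_left₀ hβ0 hβγ r
            have hb1 : (0:ℝ) ≤ β^(k+1) := pow_nonneg hβ0 _
            have hb2 : (0:ℝ) ≤ γ^(k-r) := pow_nonneg hγ0 _
            exact mul_le_mul_of_nonneg_right
              (mul_le_mul_of_nonneg_left this hb1) hb2
        _ = β^(k+1) * γ^k := by rw [mul_assoc, ← pow_add, ← hkr]
    -- sum over the bad sets
    refine le_trans (Finset.sum_le_card_nsmul _ _ _ hfiber) ?_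
    have hcard : ((Finset.univ : Finset (Finset (Fin t))).filter (fun B => k+1 ≤ B.card)).card
        ≤ 2^t := by
      refine le_trans (Finset.card_filter_le _ _) ?_
      rw [Finset.card_univ, Fintype.card_finset]
      simp
    have hc0 : (0:ℝ) ≤ β^(k+1) * γ^k := mul_nonneg (pow_nonneg hβ0 _) (pow_nonneg hγ0 _)
    have hstep : ((Finset.univ : Finset (Finset (Fin t))).filter
        (fun B => k+1 ≤ B.card)).card • (β^(k+1) * γ^k) ≤ (2^t : ℝ) * (β^(k+1) * γ^k) := by
      rw [nsmul_eq_mul]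
      apply mul_le_mul_of_nonneg_right _ hc0
      exact_mod_cast hcard
    refine le_trans hstep ?_
    -- final: 2^t β^(k+1) γ^k ≤ 2ε(4ε(1-ε))^k
    have hγβ : γ = 1 - β := by linarith
    have key : (2:ℝ)^t * (β^(k+1) * γ^k) = 2*β*(4*β*(1-β))^k := by
      rw [hγβ, ht]
      have h2t : (2:ℝ)^(2*k+1) = 4^k * 2 := by
        rw [pow_add, pow_one, pow_mul]
        norm_num
      rw [h2t, mul_pow, mul_pow]
      ring
    rw [key]
    have h4β : 0 ≤ 4*β*(1-β) := by nlinarith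
    have h4βε : 4*β*(1-β) ≤ 4*ε*(1-ε) := by nlinarith
    have hpow : (4*β*(1-β))^k ≤ (4*ε*(1-ε))^k := pow_le_pow_left₀ h4β h4βε k
    have h4ε : (0:ℝ) ≤ (4*ε*(1-ε))^k := pow_nonneg (by nlinarith) k
    nlinarith [pow_nonneg h4β k]

theorem pdeg_error_reduction :
    ∃ C : ℝ, 0 < C ∧
      ∀ (n : ℕ) (f : (Fin n → Bool) → Bool) (δ ε : ℝ),
        0 < δ → δ < ε → ε ≤ 1/3 →
        (pdeg δ f : ℝ) ≤
          (pdeg ε f : ℝ) * C * Real.logb 2 (1/δ) / Real.logb 2 (1/ε) := by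
  refine ⟨63, by norm_num, ?_⟩
  intro n f δ ε hδ hδε hε3
  have hε0 : 0 < ε := lt_trans hδ hδε
  have hε1 : ε < 1 := by linarith
  have hδ1 : δ < 1 := by linarith
  set d := pdeg ε f with hd
  have hdmem : HasProbPoly f ε d := Nat.sInf_mem (⟨n, by exact hasProbPoly_exact f hε0.le⟩ : {d | HasProbPoly f ε d}.Nonempty)
  set θ := 4*ε*(1-ε) with hθ
  have hθpos : 0 < θ := by nlinarith
  have hθ89 : θ ≤ 8/9 := by nlinarith
  have hlogε : Real.log ε < 0 := Real.log_neg hε0 hε1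
  have hlogδ : Real.log δ < 0 := Real.log_neg hδ hδ1
  have hl2 : 0 < Real.log 2 := Real.log_pos (by norm_num)
  -- log θ ≤ (1/30) log ε
  have hlogθ : Real.log θ ≤ (1/30) * Real.log ε := by
    by_cases hcase : ε ≤ 1/16
    · have h1 : θ ≤ 4*ε := by nlinarith
      have h2 : Real.log θ ≤ Real.log (4*ε) := Real.log_le_log hθpos h1
      have h3 : Real.log (4*ε) = Real.log 4 + Real.log ε :=
        Real.log_mul (by norm_num) (ne_of_gt hε0)
      have h4 : Real.log 4 = 2 * Real.log 2 := by
        rw [show (4:ℝ) = 2^2 by norm_num, Real.log_pow]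
        push_cast
        ring
      have h5 : Real.log ε ≤ Real.log (1/16) := Real.log_le_log hε0 hcase
      have h6 : Real.log (1/16 : ℝ) = -(4 * Real.log 2) := by
        rw [one_div, Real.log_inv, show (16:ℝ) = 2^4 by norm_num, Real.log_pow]
        push_cast
        ring
      rw [h6] at h5
      rw [h3, h4] at h2
      linarith
    · push_neg at hcase
      have h2 : Real.log θ ≤ Real.log (8/9) := Real.log_le_log hθpos hθ89
      have h3 : Real.log (8/9 : ℝ) ≤ 8/9 - 1 := Real.log_le_sub_one_of_pos (by norm_num)
      have h5 : Real.log (1/16 : ℝ) ≤ Real.log ε := Real.log_le_log (by norm_num) (le_of_lt hcase)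
      have h6 : Real.log (1/16 : ℝ) = -(4 * Real.log 2) := by
        rw [one_div, Real.log_inv, show (16:ℝ) = 2^4 by norm_num, Real.log_pow]
        push_cast
        ring
      rw [h6] at h5
      have hl2' : Real.log 2 < 0.6931471808 := Real.log_two_lt_d9
      linarith
  have hlogθneg : Real.log θ < 0 := lt_of_le_of_lt hlogθ (by linarith)
  -- choose k
  set k := ⌈Real.log δ / Real.log θ⌉₊ with hk
  have hrat0 : 0 ≤ Real.log δ / Real.log θ := le_of_lt (div_pos_of_neg_of_neg hlogδ hlogθneg)
  have hθk : θ^k ≤ δ := by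
    have h1 : Real.log δ / Real.log θ ≤ (k : ℝ) := Nat.le_ceil _
    have h2 : (k:ℝ) * Real.log θ ≤ Real.log δ := (div_le_iff_of_neg hlogθneg).mp h1
    have h3 : Real.log (θ^k) ≤ Real.log δ := by rwa [Real.log_pow]
    have := Real.exp_le_exp.mpr h3
    rwa [Real.exp_log (pow_pos hθpos k), Real.exp_log hδ] at this
  have herr : 2*ε*θ^k ≤ δ := by
    have h2ε : 2*ε ≤ 1 := by linarith
    calc 2*ε*θ^k ≤ 1*θ^k :=
          mul_le_mul_of_nonneg_right h2ε (pow_nonneg hθpos.le k)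
      _ = θ^k := one_mul _
      _ ≤ δ := hθk
  have hamp : HasProbPoly f δ ((2*k+1)*d) :=
    (amplify f k hε0.le hε3 hdmem).mono herr
  have hpd : pdeg δ f ≤ (2*k+1)*d := Nat.sInf_le hamp
  -- numeric bound on 2k+1
  set A := -Real.log δ with hA
  set B := -Real.log ε with hB
  have hApos : 0 < A := by simp [hA]; linarith
  have hBpos : 0 < B := by simp [hB]; linarith
  have hAB : B < A := by simp [hA, hB]; exact Real.log_lt_log hδ hδε
  have hR1 : 1 < A / B := (one_lt_div hBpos).mpr hAB
  have hkbound : (k:ℝ) < Real.log δ / Real.log θ + 1 := Nat.ceil_lt_add_one hrat0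
  have hratbound : Real.log δ / Real.log θ ≤ 30 * (A / B) := by
    have hθB : (1/30) * B ≤ -Real.log θ := by
      have := hlogθ
      simp [hB]
      linarith
    have hrw : Real.log δ / Real.log θ = A / (-Real.log θ) := by
      rw [hA]
      rw [neg_div_neg_eq]
    rw [hrw]
    have h30B : 0 < (1/30) * B := by positivity
    calc A / (-Real.log θ) ≤ A / ((1/30) * B) :=
          div_le_div_of_nonneg_left hApos.le h30B hθB
      _ = 30 * (A/B) := by
          field_simp
  have htk : (2*(k:ℝ)+1) ≤ 63 * (A/B) := by
    have : (k:ℝ) ≤ 30 * (A/B) + 1 := by linarith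
    nlinarith
  -- convert RHS
  have hlogb : Real.logb 2 (1/δ) / Real.logb 2 (1/ε) = A / B := by
    rw [Real.logb, Real.logb, one_div, one_div, Real.log_inv, Real.log_inv, ← hA, ← hB]
    rw [div_div_div_cancel_right₀]
    exact ne_of_gt hl2
  have hfinal : (pdeg δ f : ℝ) ≤ (d:ℝ) * (2*k+1) := by
    have := hpd
    have hc : ((pdeg δ f : ℕ) : ℝ) ≤ (((2*k+1)*d : ℕ) : ℝ) := Nat.cast_le.mpr this
    push_cast at hc
    linarith [hc]
  calc (pdeg δ f : ℝ) ≤ (d:ℝ) * (2*k+1) := hfinal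
    _ ≤ (d:ℝ) * (63 * (A/B)) := by
        apply mul_le_mul_of_nonneg_left _ (Nat.cast_nonneg d)
        exact_mod_cast htk
    _ = (d:ℝ) * 63 * (A/B) := by ring
    _ = (pdeg ε f : ℝ) * 63 * Real.logb 2 (1/δ) / Real.logb 2 (1/ε) := by
        rw [mul_div_assoc, hlogb, hd]
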